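/- Let g(y) = E[f(X) | Y=y, S=0]. Then for every f ∈ 𝓛(P_{X|S=0}), the limit Δ_λ(f) = lim_{ε→0⁺} (L_λ(P̃_{X|S=0}) − L_λ(P_{X|S=0}))/ε exists and equals λ₂·E[f(X)·log(P_{X|S=0}(X)/P_{X|S=1}(X)) | S=0] + λ₄·E[g(Y)·log(P_{Y|S=0}(Y)/P_{Y|S=1}(Y)) | S=0]. -/

import Mathlib

open Filter Topology

/-- Kullback–Leibler divergence between distributions on a finite set. -/
noncomputable def KLdiv {α : Type*} [Fintype α] (P Q : α → ℝ) : ℝ :=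
  ∑ a, P a * Real.log (P a / Q a)

/-- The objective `L_λ` evaluated at the perturbed distribution
`P̃_{X|S=0}(x) = P0(x)(1+εf(x))`, with `P̃_{Y|S=0} = W ∘ P̃_{X|S=0}`:
`L_λ = λ₁·D(P̃_X‖P0) + λ₂·D(P̃_X‖P1) + λ₃·D(P̃_Y‖Q0) + λ₄·D(P̃_Y‖Q1)`.
At `ε = 0` this is `L_λ(P_{X|S=0})`. -/
noncomputable def Lobj {𝒳 : Type*} [Fintype 𝒳]
    (P0 P1 : 𝒳 → ℝ) (W : 𝒳 → Bool → ℝ) (Q0 Q1 : Bool → ℝ)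
    (l1 l2 l3 l4 : ℝ) (f : 𝒳 → ℝ) (ε : ℝ) : ℝ :=
  l1 * KLdiv (fun x => P0 x * (1 + ε * f x)) P0
    + l2 * KLdiv (fun x => P0 x * (1 + ε * f x)) P1
    + l3 * KLdiv (fun y => ∑ x, P0 x * (1 + ε * f x) * W x y) Q0
    + l4 * KLdiv (fun y => ∑ x, P0 x * (1 + ε * f x) * W x y) Q1

/-- Let `g(y) = E[f(X)|Y=y,S=0]`. Then for every `f ∈ 𝓛(P_{X|S=0})`, the limit
`Δ_λ(f) = lim_{ε→0⁺} (L_λ(P̃_{X|S=0}) − L_λ(P_{X|S=0}))/ε` exists and equals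
`λ₂·E[f(X)·log(P_{X|S=0}(X)/P_{X|S=1}(X))|S=0] + λ₄·E[g(Y)·log(P_{Y|S=0}(Y)/P_{Y|S=1}(Y))|S=0]`.
Here `𝒴 = Bool` (`false ↔ 0`, `true ↔ 1`), `W x y = W_{Y|X}(y|x)` is the channel in the
Markov chain `S → X → Y`, `P0 = P_{X|S=0}`, `P1 = P_{X|S=1}` have full support on `𝒳`,
and `Q0 = P_{Y|S=0} = W ∘ P0`, `Q1 = P_{Y|S=1} = W ∘ P1` have full support on `𝒴`. -/
lemma auxDeriv (p q c : ℝ) (hp : 0 < p) (hq : 0 < q) :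
    HasDerivAt (fun ε : ℝ => p * (1 + ε * c) * Real.log (p * (1 + ε * c) / q))
      (p * c * (Real.log (p / q) + 1)) 0 := by
  have h1 : HasDerivAt (fun ε : ℝ => 1 + ε * c) c 0 := by
    simpa using ((hasDerivAt_id (0:ℝ)).mul_const c).const_add 1
  have h2 : HasDerivAt (fun ε : ℝ => p * (1 + ε * c)) (p * c) 0 := h1.const_mul p
  have h3 : HasDerivAt (fun ε : ℝ => p * (1 + ε * c) / q) (p * c / q) 0 := h2.div_const q
  have hne : p * (1 + (0:ℝ) * c) / q ≠ 0 := by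
    simp only [zero_mul, add_zero, mul_one]
    exact div_ne_zero hp.ne' hq.ne'
  have h5 := h2.fun_mul (h3.log hne)
  refine h5.congr_deriv ?_
  simp only [zero_mul, add_zero, mul_one]
  field_simp

theorem stmt0
    {𝒳 : Type*} [Fintype 𝒳]
    (P0 P1 : 𝒳 → ℝ)
    (hP0pos : ∀ x, 0 < P0 x) (hP0sum : ∑ x, P0 x = 1)
    (hP1pos : ∀ x, 0 < P1 x) (hP1sum : ∑ x, P1 x = 1)
    (W : 𝒳 → Bool → ℝ)
    (hWnn : ∀ x y, 0 ≤ W x y) (hWsum : ∀ x, W x false + W x true = 1)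
    (Q0 Q1 : Bool → ℝ)
    (hQ0 : ∀ y, Q0 y = ∑ x, P0 x * W x y) (hQ1 : ∀ y, Q1 y = ∑ x, P1 x * W x y)
    (hQ0pos : ∀ y, 0 < Q0 y) (hQ1pos : ∀ y, 0 < Q1 y)
    (l1 l2 l3 l4 : ℝ)
    (hl1 : 0 ≤ l1) (hl2 : 0 ≤ l2) (hl3 : 0 ≤ l3) (hl4 : 0 ≤ l4)
    (f : 𝒳 → ℝ)
    (hfmean : ∑ x, P0 x * f x = 0) (hfvar : ∑ x, P0 x * f x ^ 2 = 1)
    (g : Bool → ℝ)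
    (hg : ∀ y, g y = (∑ x, P0 x * W x y * f x) / Q0 y) :
    Tendsto
      (fun ε : ℝ =>
        (Lobj P0 P1 W Q0 Q1 l1 l2 l3 l4 f ε - Lobj P0 P1 W Q0 Q1 l1 l2 l3 l4 f 0) / ε)
      (nhdsWithin 0 (Set.Ioi 0))
      (nhds (l2 * ∑ x, P0 x * (f x * Real.log (P0 x / P1 x))
           + l4 * ∑ y, Q0 y * (g y * Real.log (Q0 y / Q1 y)))) := by
  classical
  set A : Bool → ℝ := fun y => ∑ x, P0 x * W x y * f x with hA
  have hAsum : A false + A true = 0 := by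
    rw [hA]
    simp only
    rw [← Finset.sum_add_distrib]
    calc (∑ x, (P0 x * W x false * f x + P0 x * W x true * f x))
        = ∑ x, P0 x * f x := by
          refine Finset.sum_congr rfl fun x _ => ?_
          linear_combination P0 x * f x * hWsum x
      _ = 0 := hfmean
  have hQrw : ∀ (ε : ℝ) (y : Bool),
      (∑ x, P0 x * (1 + ε * f x) * W x y) = Q0 y * (1 + ε * (A y / Q0 y)) := by
    intro ε y
    have h1 : (∑ x, P0 x * (1 + ε * f x) * W x y) = (∑ x, P0 x * W x y) + ε * A y := by
      rw [hA]
      simp only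
      rw [Finset.mul_sum, ← Finset.sum_add_distrib]
      exact Finset.sum_congr rfl fun x _ => by ring
    rw [h1, ← hQ0 y]
    have hne := (hQ0pos y).ne'
    field_simp
  have hgy : ∀ y, Q0 y * g y = A y := by
    intro y
    rw [hg y, hA]
    simp only
    rw [mul_comm, div_mul_cancel₀ _ (hQ0pos y).ne']
  -- rewrite Lobj
  have hFG : (fun ε => Lobj P0 P1 W Q0 Q1 l1 l2 l3 l4 f ε)
      = fun ε => l1 * ∑ x, P0 x * (1 + ε * f x) * Real.log (P0 x * (1 + ε * f x) / P0 x)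
        + l2 * ∑ x, P0 x * (1 + ε * f x) * Real.log (P0 x * (1 + ε * f x) / P1 x)
        + l3 * ∑ y, Q0 y * (1 + ε * (A y / Q0 y)) * Real.log (Q0 y * (1 + ε * (A y / Q0 y)) / Q0 y)
        + l4 * ∑ y, Q0 y * (1 + ε * (A y / Q0 y)) * Real.log (Q0 y * (1 + ε * (A y / Q0 y)) / Q1 y) := by
    funext ε
    simp only [Lobj, KLdiv, hQrw]
  have hD : HasDerivAt
      (fun ε => l1 * ∑ x, P0 x * (1 + ε * f x) * Real.log (P0 x * (1 + ε * f x) / P0 x)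
        + l2 * ∑ x, P0 x * (1 + ε * f x) * Real.log (P0 x * (1 + ε * f x) / P1 x)
        + l3 * ∑ y, Q0 y * (1 + ε * (A y / Q0 y)) * Real.log (Q0 y * (1 + ε * (A y / Q0 y)) / Q0 y)
        + l4 * ∑ y, Q0 y * (1 + ε * (A y / Q0 y)) * Real.log (Q0 y * (1 + ε * (A y / Q0 y)) / Q1 y))
      (l1 * ∑ x, P0 x * f x * (Real.log (P0 x / P0 x) + 1)
        + l2 * ∑ x, P0 x * f x * (Real.log (P0 x / P1 x) + 1)
        + l3 * ∑ y, Q0 y * (A y / Q0 y) * (Real.log (Q0 y / Q0 y) + 1)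
        + l4 * ∑ y, Q0 y * (A y / Q0 y) * (Real.log (Q0 y / Q1 y) + 1)) 0 := by
    refine HasDerivAt.add (HasDerivAt.add (HasDerivAt.add ?_ ?_) ?_) ?_
    · exact (HasDerivAt.fun_sum fun x _ => auxDeriv (P0 x) (P0 x) (f x) (hP0pos x) (hP0pos x)).const_mul l1
    · exact (HasDerivAt.fun_sum fun x _ => auxDeriv (P0 x) (P1 x) (f x) (hP0pos x) (hP1pos x)).const_mul l2
    · exact (HasDerivAt.fun_sum fun y _ => auxDeriv (Q0 y) (Q0 y) (A y / Q0 y) (hQ0pos y) (hQ0pos y)).const_mul l3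
    · exact (HasDerivAt.fun_sum fun y _ => auxDeriv (Q0 y) (Q1 y) (A y / Q0 y) (hQ0pos y) (hQ1pos y)).const_mul l4
  have hcancel : ∀ y, Q0 y * (A y / Q0 y) = A y := fun y => by
    rw [mul_comm, div_mul_cancel₀ _ (hQ0pos y).ne']
  have e1 : (∑ x, P0 x * f x * (Real.log (P0 x / P0 x) + 1)) = 0 := by
    have h : ∀ x : 𝒳, Real.log (P0 x / P0 x) = 0 := fun x => by
      rw [div_self (hP0pos x).ne', Real.log_one]
    simp only [h, zero_add, mul_one]
    exact hfmean
  have e2 : (∑ x, P0 x * f x * (Real.log (P0 x / P1 x) + 1))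
      = ∑ x, P0 x * (f x * Real.log (P0 x / P1 x)) := by
    have h : ∀ x : 𝒳, P0 x * f x * (Real.log (P0 x / P1 x) + 1)
        = P0 x * (f x * Real.log (P0 x / P1 x)) + P0 x * f x := fun x => by ring
    rw [Finset.sum_congr rfl fun x _ => h x, Finset.sum_add_distrib, hfmean, add_zero]
  have e3 : (∑ y, Q0 y * (A y / Q0 y) * (Real.log (Q0 y / Q0 y) + 1)) = 0 := by
    have h : ∀ y : Bool, Real.log (Q0 y / Q0 y) = 0 := fun y => by
      rw [div_self (hQ0pos y).ne', Real.log_one]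
    simp only [h, zero_add, mul_one, hcancel]
    rw [Fintype.sum_bool]
    linarith [hAsum]
  have e4 : (∑ y, Q0 y * (A y / Q0 y) * (Real.log (Q0 y / Q1 y) + 1))
      = ∑ y, Q0 y * (g y * Real.log (Q0 y / Q1 y)) := by
    have h : ∀ y : Bool, Q0 y * (A y / Q0 y) * (Real.log (Q0 y / Q1 y) + 1)
        = Q0 y * (g y * Real.log (Q0 y / Q1 y)) + A y := fun y => by
      rw [hcancel y]
      linear_combination (-Real.log (Q0 y / Q1 y)) * hgy y
    rw [Finset.sum_congr rfl fun y _ => h y, Finset.sum_add_distrib]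
    have hz : (∑ y : Bool, A y) = 0 := by rw [Fintype.sum_bool]; linarith [hAsum]
    rw [hz, add_zero]
  have hF : HasDerivAt (fun ε => Lobj P0 P1 W Q0 Q1 l1 l2 l3 l4 f ε)
      (l2 * ∑ x, P0 x * (f x * Real.log (P0 x / P1 x))
        + l4 * ∑ y, Q0 y * (g y * Real.log (Q0 y / Q1 y))) 0 := by
    rw [hFG]
    convert hD using 1
    rw [e1, e2, e3, e4]
    ring
  have h := hasDerivAt_iff_tendsto_slope.mp hF
  have h2 := h.mono_left (nhdsWithin_mono (0:ℝ)
    (fun x hx => Set.mem_compl_singleton_iff.mpr (ne_of_gt hx)))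
  exact h2.congr fun ε => by rw [slope_def_field, sub_zero]
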